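/- arXiv:q-alg/9608010 — 2 statements merged into one kernel-verified Lean document; each statement's English description precedes it below -/
import Mathlib

section
/- Let H be a Hopf algebra over a commutative ring R with comultiplication Δ and antipode S, let n be a natural number, let t : Fin n → H be a family of elements of H, and let ρ : H → Matrix (Fin n) (Fin n) R be an R-linear map. Assume the adjoint-covariance condition: for all x ∈ H and all i, Σ x_(1) · (t i) · S(x_(2)) = Σ_j (ρ x)_{j i} • (t j). Then for all x ∈ H and all i: x · (t i) = Σ_j Σ (ρ(x_(1)))_{j i} • ((t j) · x_(2)). -/
set_option maxHeartbeats 1000000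
set_option synthInstance.maxHeartbeats 400000

open TensorProduct

/-- The adjoint action as a linear map `H ⊗ H → H`, sending `x ⊗ y` to
`(ad x)(y) = Σ x_(1) · y · S(x_(2))`. -/
noncomputable def adMap (R H : Type*) [CommRing R] [Ring H] [HopfAlgebra R H] :
    H ⊗[R] H →ₗ[R] H :=
  (LinearMap.mul' R H) ∘ₗ
    (LinearMap.lTensor H ((LinearMap.mul' R H) ∘ₗ
      (TensorProduct.comm R H H).toLinearMap ∘ₗ
      (LinearMap.rTensor H (HopfAlgebra.antipode (R := R))))) ∘ₗ
    (TensorProduct.assoc R H H H).toLinearMap ∘ₗ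
    (LinearMap.rTensor H (Coalgebra.comul (R := R) (A := H)))

/-- The linear functional on matrices picking out the `(j, i)` entry. -/
def entryL (R : Type*) [CommRing R] {n : ℕ} (j i : Fin n) :
    Matrix (Fin n) (Fin n) R →ₗ[R] R where
  toFun m := m j i
  map_add' := by intro x y; simp
  map_smul' := by intro r x; simp

section Aux
variable (R H : Type*) [CommRing R] [Ring H] [HopfAlgebra R H]

/-- `adMap (a ⊗ y) = m (lTensor (mulLeft y ∘ S) (Δ a))`. -/
lemma adMap_tmul (a y : H) :
    adMap R H (a ⊗ₜ[R] y) =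
      LinearMap.mul' R H
        (LinearMap.lTensor H
          (LinearMap.mulLeft R y ∘ₗ (HopfAlgebra.antipode (R := R) (A := H)))
          (Coalgebra.comul a)) := by
  rw [adMap]
  simp only [LinearMap.comp_apply, LinearMap.rTensor_tmul, LinearEquiv.coe_coe]
  induction (Coalgebra.comul (R := R) a) using TensorProduct.induction_on with
  | zero => simp only [zero_tmul, map_zero, LinearEquiv.coe_coe, LinearEquiv.map_zero]
  | tmul b c => simp
  | add u v hu hv =>
    simp only [map_add, add_tmul, LinearEquiv.coe_coe, hu, hv]

/-- key Hopf-algebraic lemma: `Σ (ad x₁)(y) · x₂ = x · y`. -/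
lemma key (y : H) (x : H) :
    LinearMap.mul' R H
      ((LinearMap.rTensor H (adMap R H ∘ₗ (TensorProduct.mk R H H).flip y))
        (Coalgebra.comul x)) = x * y := by
  set m := LinearMap.mul' R H with hm
  set S : H →ₗ[R] H := HopfAlgebra.antipode (R := R) with hS
  set g : H →ₗ[R] H := LinearMap.mulLeft R y ∘ₗ S with hg
  have hΦ : (adMap R H ∘ₗ (TensorProduct.mk R H H).flip y) =
      m ∘ₗ LinearMap.lTensor H g ∘ₗ Coalgebra.comul := by
    ext a
    simp only [LinearMap.comp_apply, TensorProduct.mk_apply, LinearMap.flip_apply]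
    exact adMap_tmul R H a y
  rw [hΦ]
  rw [LinearMap.rTensor_comp, LinearMap.rTensor_comp]
  simp only [LinearMap.comp_apply]
  rw [← Coalgebra.coassoc_symm_apply (R := R) x]
  have hassoc : ∀ z : H ⊗[R] (H ⊗[R] H),
      m (LinearMap.rTensor H m
        (LinearMap.rTensor H (LinearMap.lTensor H g)
          ((TensorProduct.assoc R H H H).symm z))) =
      m (LinearMap.lTensor H (m ∘ₗ LinearMap.rTensor H g) z) := by
    intro z
    induction z using TensorProduct.induction_on with
    | zero => simp only [map_zero, LinearEquiv.map_zero]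
    | tmul a bc =>
      induction bc using TensorProduct.induction_on with
      | zero => simp only [tmul_zero, map_zero, LinearEquiv.map_zero]
      | tmul b c =>
        simp [hm, mul_assoc]
      | add u v hu hv =>
        simp only [tmul_add, map_add, LinearEquiv.map_add, hu, hv]
    | add u v hu hv => simp only [map_add, LinearEquiv.map_add, hu, hv]
  rw [hassoc]
  have hinner : m ∘ₗ LinearMap.rTensor H g ∘ₗ Coalgebra.comul =
      LinearMap.mulLeft R y ∘ₗ (Algebra.linearMap R H) ∘ₗ
        (Coalgebra.counit (R := R) (A := H)) := by
    have h1 : m ∘ₗ LinearMap.rTensor H (LinearMap.mulLeft R y) =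
        LinearMap.mulLeft R y ∘ₗ m := by
      apply TensorProduct.ext'
      intro a b
      simp [hm, mul_assoc]
    rw [hg, LinearMap.rTensor_comp]
    calc m ∘ₗ (LinearMap.rTensor H (LinearMap.mulLeft R y) ∘ₗ LinearMap.rTensor H S) ∘ₗ
          Coalgebra.comul
        = (m ∘ₗ LinearMap.rTensor H (LinearMap.mulLeft R y)) ∘ₗ
            (LinearMap.rTensor H S ∘ₗ Coalgebra.comul) := by
          simp only [LinearMap.comp_assoc]
      _ = LinearMap.mulLeft R y ∘ₗ (m ∘ₗ LinearMap.rTensor H S ∘ₗ Coalgebra.comul) := by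
          rw [h1]; simp only [LinearMap.comp_assoc]
      _ = _ := by
          rw [hm, hS, HopfAlgebra.mul_antipode_rTensor_comul]
  have hfin : LinearMap.lTensor H (m ∘ₗ LinearMap.rTensor H g)
      (LinearMap.lTensor H (Coalgebra.comul (R := R) (A := H)) (Coalgebra.comul x)) =
      LinearMap.lTensor H (LinearMap.mulLeft R y ∘ₗ (Algebra.linearMap R H))
        (LinearMap.lTensor H (Coalgebra.counit (R := R) (A := H)) (Coalgebra.comul x)) := by
    rw [← LinearMap.comp_apply, ← LinearMap.lTensor_comp, LinearMap.comp_assoc, hinner,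
      ← LinearMap.comp_assoc, LinearMap.lTensor_comp, LinearMap.comp_apply]
  rw [hfin, Coalgebra.lTensor_counit_comul]
  simp [hm, LinearMap.lTensor_tmul]

end Aux

/-- if the family `t : Fin n → H` is adjoint-covariant with representation
matrix `ρ`, i.e. `Σ x_(1) · (t i) · S(x_(2)) = Σ_j (ρ x)_{j i} • (t j)`, then
`x · (t i) = Σ_j Σ (ρ(x_(1)))_{j i} • ((t j) · x_(2))`. -/
theorem mul_eq_adjoint_covariant (R H : Type*) [CommRing R] [Ring H] [HopfAlgebra R H]
    {n : ℕ} (t : Fin n → H) (ρ : H →ₗ[R] Matrix (Fin n) (Fin n) R)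
    (hcov : ∀ (x : H) (i : Fin n), adMap R H (x ⊗ₜ[R] t i) = ∑ j, ρ x j i • t j) :
    ∀ (x : H) (i : Fin n),
      x * t i =
        ∑ j, t j *
          (TensorProduct.lid R H)
            ((LinearMap.rTensor H ((entryL R j i) ∘ₗ ρ)) (Coalgebra.comul x)) := by
  intro x i
  have hA : ∀ z : H ⊗[R] H,
      ∑ j, t j * (TensorProduct.lid R H)
          ((LinearMap.rTensor H ((entryL R j i) ∘ₗ ρ)) z) =
      LinearMap.mul' R H
        ((LinearMap.rTensor H (adMap R H ∘ₗ (TensorProduct.mk R H H).flip (t i))) z) := by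
    intro z
    induction z using TensorProduct.induction_on with
    | zero => simp
    | tmul a b =>
      simp only [LinearMap.rTensor_tmul, LinearMap.comp_apply, TensorProduct.lid_tmul,
        TensorProduct.mk_apply, LinearMap.flip_apply, LinearMap.mul'_apply, entryL]
      rw [hcov a i, Finset.sum_mul]
      simp [smul_mul_assoc, mul_smul_comm, entryL]
      rfl
    | add u v hu hv =>
      simp only [map_add, mul_add, Finset.sum_add_distrib, hu, hv]
  rw [← key R H (t i) x, hA]
end

section
/- Let H be a bialgebra over a commutative ring R with comultiplication Δ, let R̃ ∈ H ⊗ H be an invertible element satisfying R̃ · Δ(x) = Δ^op(x) · R̃ for all x ∈ H (where Δ^op is the flip of Δ), and let ρ : H → Matrix (Fin n) (Fin n) k be a unital R-algebra homomorphism into matrices over a commutative R-algebra k. Write M = (ρ ⊗ ρ) : H ⊗ H → Matrix (Fin n × Fin n) (Fin n × Fin n) k for the induced algebra map (identifying Matrix n k ⊗ Matrix n k with matrices indexed by pairs) and Rm = M(R̃). Then Rm is invertible and for all x ∈ H: M(Δ(x)) = Rm⁻¹ · M(Δ^op(x)) · Rm. Equivalently, the matrix-coefficient functionals T_a^b(x)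 = ρ(x)_a^b satisfy, in the convolution algebra of functionals with (f ⋆ g)(x) = Σ f(x_(1)) g(x_(2)): T_a^b ⋆ T_c^d = Σ (Rm⁻¹)_{(a,c)}^{(a',c')} (T_{c'}^{d'} ⋆ T_{a'}^{b'}) Rm_{(b',d')}^{(b,d)}. -/
open TensorProduct

/-- The map `M = ρ ⊗ ρ : H ⊗ H → Matrix (Fin n × Fin n) (Fin n × Fin n) k` induced by a
matrix representation `ρ` of `H`, identifying `Matrix n k ⊗ Matrix n k` with matrices
indexed by pairs via the Kronecker product. -/
noncomputable def Mmap (R k H : Type*) [CommRing R] [CommRing k] [Algebra R k]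
    [Ring H] [Algebra R H] {n : ℕ} (ρ : H →ₐ[R] Matrix (Fin n) (Fin n) k) :
    H ⊗[R] H →ₗ[R] Matrix (Fin n × Fin n) (Fin n × Fin n) k :=
  TensorProduct.lift
    ((Matrix.kroneckerMapBilinear (LinearMap.mul R k)).compl₁₂ ρ.toLinearMap ρ.toLinearMap)



lemma Mmap_tmul (R k H : Type*) [CommRing R] [CommRing k] [Algebra R k]
    [Ring H] [Algebra R H] {n : ℕ} (ρ : H →ₐ[R] Matrix (Fin n) (Fin n) k) (a b : H) :
    Mmap R k H ρ (a ⊗ₜ b) = Matrix.kroneckerMap (· * ·) (ρ a) (ρ b) := rfl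

lemma Mmap_mul (R k H : Type*) [CommRing R] [CommRing k] [Algebra R k]
    [Ring H] [Algebra R H] {n : ℕ} (ρ : H →ₐ[R] Matrix (Fin n) (Fin n) k) (x y : H ⊗[R] H) :
    Mmap R k H ρ (x * y) = Mmap R k H ρ x * Mmap R k H ρ y := by
  induction x using TensorProduct.induction_on with
  | zero => simp
  | tmul a b =>
    induction y using TensorProduct.induction_on with
    | zero => simp
    | tmul c d =>
      rw [Algebra.TensorProduct.tmul_mul_tmul, Mmap_tmul, Mmap_tmul, Mmap_tmul,
        map_mul, map_mul, ← Matrix.mul_kronecker_mul]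
    | add y z hy hz => rw [mul_add, map_add, hy, hz, map_add, mul_add]
  | add x z hx hz => rw [add_mul, map_add, hx, hz, map_add, add_mul]

lemma Mmap_one (R k H : Type*) [CommRing R] [CommRing k] [Algebra R k]
    [Ring H] [Algebra R H] {n : ℕ} (ρ : H →ₐ[R] Matrix (Fin n) (Fin n) k) :
    Mmap R k H ρ (1 : H ⊗[R] H) = 1 := by
  rw [Algebra.TensorProduct.one_def, Mmap_tmul, map_one]
  exact Matrix.one_kronecker_one (α := k)

/-- the RTT relation.  If `R̃ ∈ H ⊗ H` is invertible (with inverse `R̃'`)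
and satisfies `R̃ · Δ(x) = Δ^op(x) · R̃`, and `ρ` is a unital algebra map into matrices,
then `Rm = M(R̃)` is invertible (with inverse `M(R̃')`) and
`M(Δ(x)) = Rm⁻¹ · M(Δ^op(x)) · Rm` for all `x ∈ H`. -/
theorem rtt_relation (R k H : Type*) [CommRing R] [CommRing k] [Algebra R k]
    [Ring H] [Bialgebra R H] {n : ℕ}
    (Rt Rt' : H ⊗[R] H) (hinv1 : Rt * Rt' = 1) (hinv2 : Rt' * Rt = 1)
    (hqc : ∀ x : H,
      Rt * Coalgebra.comul (R := R) x =
        (TensorProduct.comm R H H) (Coalgebra.comul (R := R) x) * Rt)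
    (ρ : H →ₐ[R] Matrix (Fin n) (Fin n) k) :
    Mmap R k H ρ Rt * Mmap R k H ρ Rt' = 1 ∧
    Mmap R k H ρ Rt' * Mmap R k H ρ Rt = 1 ∧
    ∀ x : H,
      Mmap R k H ρ (Coalgebra.comul (R := R) x) =
        Mmap R k H ρ Rt' *
          Mmap R k H ρ ((TensorProduct.comm R H H) (Coalgebra.comul (R := R) x)) *
          Mmap R k H ρ Rt := by
  refine ⟨by rw [← Mmap_mul, hinv1, Mmap_one], by rw [← Mmap_mul, hinv2, Mmap_one], fun x => ?_⟩
  calc Mmap R k H ρ (Coalgebra.comul (R := R) x)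
      = Mmap R k H ρ Rt' * Mmap R k H ρ (Rt * Coalgebra.comul (R := R) x) := by
        rw [← Mmap_mul, ← mul_assoc, hinv2, one_mul]
    _ = _ := by rw [hqc, Mmap_mul, mul_assoc]
end
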